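/- Let η(m) := ∏_{p prime, p∣m} p/(p+1) and A := ∏_{p prime} (1 + p/((p+1)²(p−1))). For every ε > 0 there exists a constant C > 0 such that for every prime P > 2 and every real K ≥ 2: |Σ_{m ≤ K, m odd, gcd(m,P)=1} η(m)/m² − 9A/11| ≤ C(1/P² + K^{ε−1}) and |Σ_{m ≤ K, gcd(m,P)=1} η(2m)/m² − 8A/11| ≤ C(1/P² + K^{ε−1}). -/

import Mathlib

/-- `η(m) = ∏_{p prime, p ∣ m} p / (p + 1)`. -/
noncomputable def eta (m : ℕ) : ℝ := ∏ p ∈ m.primeFactors, (p : ℝ) / ((p : ℝ) + 1)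

/-- `A = ∏_{p prime} (1 + p / ((p+1)² (p-1)))`. -/
noncomputable def Aconst : ℝ :=
  ∏' p : Nat.Primes, (1 + ((p : ℕ) : ℝ) / ((((p : ℕ) : ℝ) + 1) ^ 2 * (((p : ℕ) : ℝ) - 1)))

noncomputable def etaodd (m : ℕ) : ℝ :=
  ∏ p ∈ m.primeFactors.erase 2, (p : ℝ) / ((p : ℝ) + 1)

lemma fac_nonneg (p : ℕ) : 0 ≤ (p : ℝ) / ((p : ℝ) + 1) := by positivity

lemma fac_le_one (p : ℕ) : (p : ℝ) / ((p : ℝ) + 1) ≤ 1 := by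
  rw [div_le_one (by positivity)]; linarith

lemma eta_nonneg (m : ℕ) : 0 ≤ eta m :=
  Finset.prod_nonneg fun p _ => fac_nonneg p

lemma eta_le_one (m : ℕ) : eta m ≤ 1 :=
  Finset.prod_le_one (fun p _ => fac_nonneg p) (fun p _ => fac_le_one p)

lemma etaodd_nonneg (m : ℕ) : 0 ≤ etaodd m :=
  Finset.prod_nonneg fun p _ => fac_nonneg p

lemma etaodd_le_one (m : ℕ) : etaodd m ≤ 1 :=
  Finset.prod_le_one (fun p _ => fac_nonneg p) (fun p _ => fac_le_one p)

lemma eta_one : eta 1 = 1 := by simp [eta]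

lemma etaodd_one : etaodd 1 = 1 := by simp [etaodd]

lemma eta_mul {m n : ℕ} (hm : m ≠ 0) (hn : n ≠ 0) (h : Nat.Coprime m n) :
    eta (m * n) = eta m * eta n := by
  rw [eta, Nat.primeFactors_mul hm hn,
    Finset.prod_union (Nat.Coprime.disjoint_primeFactors h)]
  rfl

lemma etaodd_mul {m n : ℕ} (hm : m ≠ 0) (hn : n ≠ 0) (h : Nat.Coprime m n) :
    etaodd (m * n) = etaodd m * etaodd n := by
  rw [etaodd, Nat.primeFactors_mul hm hn, Finset.erase_union_distrib,
    Finset.prod_union (Finset.disjoint_of_subset_left (Finset.erase_subset _ _)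
      (Finset.disjoint_of_subset_right (Finset.erase_subset _ _)
        (Nat.Coprime.disjoint_primeFactors h)))]
  rfl

lemma eta_two_mul {m : ℕ} (hm : m ≠ 0) : eta (2 * m) = 2 / 3 * etaodd m := by
  have h2 : (2 * m).primeFactors = insert 2 m.primeFactors := by
    rw [Nat.primeFactors_mul two_ne_zero hm, Nat.Prime.primeFactors Nat.prime_two]
    rfl
  have h3 : insert 2 m.primeFactors = insert 2 (m.primeFactors.erase 2) := by
    ext x
    simp only [Finset.mem_insert, Finset.mem_erase]
    tauto
  rw [eta, h2, h3, Finset.prod_insert (by simp)]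
  norm_num [etaodd]

lemma eta_pow {p : ℕ} (hp : p.Prime) (e : ℕ) :
    eta (p ^ (e + 1)) = (p : ℝ) / ((p : ℝ) + 1) := by
  rw [eta, Nat.primeFactors_prime_pow (Nat.succ_ne_zero e) hp, Finset.prod_singleton]

lemma etaodd_pow_two (e : ℕ) : etaodd (2 ^ e) = 1 := by
  rcases e with _ | e
  · simp [etaodd]
  · rw [etaodd, Nat.primeFactors_prime_pow (Nat.succ_ne_zero e) Nat.prime_two]
    simp

lemma etaodd_pow_odd {p : ℕ} (hp : p.Prime) (hp2 : p ≠ 2) (e : ℕ) :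
    etaodd (p ^ (e + 1)) = (p : ℝ) / ((p : ℝ) + 1) := by
  rw [etaodd, Nat.primeFactors_prime_pow (Nat.succ_ne_zero e) hp,
    Finset.erase_eq_of_notMem (by simpa using hp2.symm), Finset.prod_singleton]

/-! ### The four multiplicative functions -/

noncomputable def gfun (m : ℕ) : ℝ := eta m / (m : ℝ) ^ 2

noncomputable def goddfun (m : ℕ) : ℝ := if Odd m then gfun m else 0

noncomputable def f1fun (P m : ℕ) : ℝ :=
  if Odd m ∧ Nat.gcd m P = 1 then eta m / (m : ℝ) ^ 2 else 0

noncomputable def hPfun (P m : ℕ) : ℝ :=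
  if Nat.gcd m P = 1 then etaodd m / (m : ℝ) ^ 2 else 0

lemma f1fun_eq (P m : ℕ) :
    f1fun P m = if Odd m ∧ Nat.gcd m P = 1 then gfun m else 0 := rfl

lemma gfun_zero : gfun 0 = 0 := by simp [gfun]
lemma gfun_one : gfun 1 = 1 := by simp [gfun, eta_one]
lemma goddfun_zero : goddfun 0 = 0 := by simp [goddfun, gfun_zero]
lemma goddfun_one : goddfun 1 = 1 := by simp [goddfun, gfun_one]
lemma f1fun_zero (P : ℕ) : f1fun P 0 = 0 := by simp [f1fun]
lemma f1fun_one (P : ℕ) : f1fun P 1 = 1 := by simp [f1fun, eta_one]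
lemma hPfun_zero (P : ℕ) : hPfun P 0 = 0 := by simp [hPfun]
lemma hPfun_one (P : ℕ) : hPfun P 1 = 1 := by simp [hPfun, etaodd_one]

lemma gfun_nonneg (m : ℕ) : 0 ≤ gfun m :=
  div_nonneg (eta_nonneg m) (by positivity)

lemma gfun_le (m : ℕ) : gfun m ≤ ((m : ℝ) ^ 2)⁻¹ := by
  rcases Nat.eq_zero_or_pos m with rfl | hm
  · simp [gfun_zero]
  · rw [gfun, div_le_iff₀ (by positivity), inv_mul_cancel₀ (by positivity)]
    exact eta_le_one m

lemma goddfun_nonneg (m : ℕ) : 0 ≤ goddfun m := by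
  unfold goddfun; split <;> [exact gfun_nonneg m; exact le_rfl]

lemma goddfun_le (m : ℕ) : goddfun m ≤ ((m : ℝ) ^ 2)⁻¹ := by
  unfold goddfun; split
  · exact gfun_le m
  · positivity

lemma f1fun_nonneg (P m : ℕ) : 0 ≤ f1fun P m := by
  rw [f1fun_eq]; split <;> [exact gfun_nonneg m; exact le_rfl]

lemma f1fun_le (P m : ℕ) : f1fun P m ≤ ((m : ℝ) ^ 2)⁻¹ := by
  rw [f1fun_eq]; split
  · exact gfun_le m
  · positivity

lemma hPfun_nonneg (P m : ℕ) : 0 ≤ hPfun P m := by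
  unfold hPfun; split
  · exact div_nonneg (etaodd_nonneg m) (by positivity)
  · exact le_rfl

lemma hPfun_le (P m : ℕ) : hPfun P m ≤ ((m : ℝ) ^ 2)⁻¹ := by
  unfold hPfun; split
  · rcases Nat.eq_zero_or_pos m with rfl | hm
    · simp
    · rw [div_le_iff₀ (by positivity), inv_mul_cancel₀ (by positivity)]
      exact etaodd_le_one m
  · positivity

lemma summable_of_le_inv_sq {f : ℕ → ℝ} (h0 : ∀ m, 0 ≤ f m)
    (h1 : ∀ m, f m ≤ ((m : ℝ) ^ 2)⁻¹) : Summable (fun m => ‖f m‖) := by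
  have hs : Summable (fun m : ℕ => ((m : ℝ) ^ 2)⁻¹) := by
    simpa using (Real.summable_one_div_nat_pow (p := 2)).mpr one_lt_two
  exact Summable.of_nonneg_of_le (fun m => norm_nonneg _)
    (fun m => by rw [Real.norm_eq_abs, abs_of_nonneg (h0 m)]; exact h1 m) hs

/-! ### Multiplicativity -/

lemma gfun_mul {m n : ℕ} (h : Nat.Coprime m n) : gfun (m * n) = gfun m * gfun n := by
  rcases Nat.eq_zero_or_pos m with rfl | hm
  · simp [gfun_zero]
  rcases Nat.eq_zero_or_pos n with rfl | hn
  · simp [gfun_zero]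
  rw [gfun, gfun, gfun, eta_mul hm.ne' hn.ne' h, Nat.cast_mul, mul_pow]
  rw [div_mul_div_comm]

lemma goddfun_mul {m n : ℕ} (h : Nat.Coprime m n) :
    goddfun (m * n) = goddfun m * goddfun n := by
  unfold goddfun
  simp only [Nat.odd_mul]
  by_cases h1 : Odd m <;> by_cases h2 : Odd n <;>
    simp [h1, h2, gfun_mul h]

lemma f1fun_mul (P : ℕ) {m n : ℕ} (h : Nat.Coprime m n) :
    f1fun P (m * n) = f1fun P m * f1fun P n := by
  rw [f1fun_eq, f1fun_eq, f1fun_eq]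
  simp only [Nat.odd_mul]
  have hco : Nat.gcd (m * n) P = 1 ↔ Nat.gcd m P = 1 ∧ Nat.gcd n P = 1 :=
    Nat.coprime_mul_iff_left
  by_cases h1 : Odd m ∧ Nat.gcd m P = 1 <;> by_cases h2 : Odd n ∧ Nat.gcd n P = 1
  · rw [if_pos ⟨⟨h1.1, h2.1⟩, hco.mpr ⟨h1.2, h2.2⟩⟩, if_pos h1, if_pos h2, gfun_mul h]
  · rw [if_neg (fun hc => h2 ⟨hc.1.2, (hco.mp hc.2).2⟩), if_neg h2, mul_zero]
  · rw [if_neg (fun hc => h1 ⟨hc.1.1, (hco.mp hc.2).1⟩), if_neg h1, zero_mul]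
  · rw [if_neg (fun hc => h1 ⟨hc.1.1, (hco.mp hc.2).1⟩), if_neg h1, zero_mul]

lemma hPfun_mul (P : ℕ) {m n : ℕ} (h : Nat.Coprime m n) :
    hPfun P (m * n) = hPfun P m * hPfun P n := by
  unfold hPfun
  have hco : Nat.gcd (m * n) P = 1 ↔ Nat.gcd m P = 1 ∧ Nat.gcd n P = 1 :=
    Nat.coprime_mul_iff_left
  by_cases h1 : Nat.gcd m P = 1 <;> by_cases h2 : Nat.gcd n P = 1
  · rw [if_pos (hco.mpr ⟨h1, h2⟩), if_pos h1, if_pos h2]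
    rcases Nat.eq_zero_or_pos m with rfl | hm
    · simp
    rcases Nat.eq_zero_or_pos n with rfl | hn
    · simp
    rw [etaodd_mul hm.ne' hn.ne' h, Nat.cast_mul, mul_pow, div_mul_div_comm]
  · rw [if_neg (fun hc => h2 (hco.mp hc).2), if_neg h2, mul_zero]
  · rw [if_neg (fun hc => h1 (hco.mp hc).1), if_neg h1, zero_mul]
  · rw [if_neg (fun hc => h1 (hco.mp hc).1), if_neg h1, zero_mul]

/-! ### Local factors -/

noncomputable def Ffac (p : ℕ) : ℝ :=
  1 + (p : ℝ) / (((p : ℝ) + 1) ^ 2 * ((p : ℝ) - 1))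

lemma Ffac_two : Ffac 2 = 11 / 9 := by norm_num [Ffac]

lemma geom_aux (c r : ℝ) (hr0 : 0 ≤ r) (hr1 : r < 1) :
    ∑' e : ℕ, (if e = 0 then (1 : ℝ) else c * r ^ e) = 1 + c * r / (1 - r) := by
  have hgeom : Summable (fun e : ℕ => c * r ^ e) :=
    (summable_geometric_of_lt_one hr0 hr1).mul_left c
  have hsingle : Summable (fun e : ℕ => if e = 0 then (1 : ℝ) - c else 0) :=
    summable_of_ne_finset_zero (s := {0}) fun e he => if_neg (by simpa using he)
  have key : (fun e : ℕ => if e = 0 then (1 : ℝ) else c * r ^ e)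
      = fun e => (if e = 0 then (1 : ℝ) - c else 0) + c * r ^ e := by
    funext e
    rcases eq_or_ne e 0 with rfl | he
    · simp
    · simp [he]
  rw [key, Summable.tsum_add hsingle hgeom, tsum_ite_eq 0 (fun _ => (1 : ℝ) - c), tsum_mul_left,
    tsum_geometric_of_lt_one hr0 hr1]
  have h1r : 1 - r ≠ 0 := by linarith
  field_simp
  ring

lemma rp_lt_one {p : ℕ} (hp : p.Prime) : ((p : ℝ) ^ 2)⁻¹ < 1 := by
  have : (1 : ℝ) < (p : ℝ) := by exact_mod_cast hp.one_lt
  rw [inv_lt_one_iff₀]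
  right; nlinarith

lemma factor_gfun {p : ℕ} (hp : p.Prime) :
    ∑' e : ℕ, gfun (p ^ e) = Ffac p := by
  have hp1 : (1 : ℝ) < (p : ℝ) := by exact_mod_cast hp.one_lt
  have h : ∀ e : ℕ, gfun (p ^ e)
      = if e = 0 then (1 : ℝ) else ((p : ℝ) / ((p : ℝ) + 1)) * (((p : ℝ) ^ 2)⁻¹) ^ e := by
    intro e
    rcases e with _ | e
    · simp [gfun_one]
    · rw [gfun, eta_pow hp, if_neg (Nat.succ_ne_zero e), Nat.cast_pow]
      have hp0 : (p : ℝ) ≠ 0 := by positivity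
      field_simp
      rw [one_div, inv_pow, ← pow_mul, ← pow_mul, mul_comm 2, mul_inv_cancel₀ (by positivity)]
  rw [tsum_congr h, geom_aux _ _ (by positivity) (rp_lt_one hp)]
  rw [Ffac]
  congr 1
  have h1 : ((p : ℝ) + 1) ^ 2 * ((p : ℝ) - 1) ≠ 0 := by
    have h2 : ((p : ℝ) - 1) ≠ 0 := by intro hc; linarith
    positivity
  have h3 : (1 : ℝ) - ((p : ℝ) ^ 2)⁻¹ ≠ 0 := by
    have := rp_lt_one hp; intro hc; linarith
  have hp0 : (p : ℝ) ≠ 0 := by positivity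
  rw [div_eq_div_iff h3 h1]
  field_simp
  ring

lemma odd_pow_of_odd {p : ℕ} (hp : p.Prime) (hp2 : p ≠ 2) (e : ℕ) : Odd (p ^ e) :=
  (hp.odd_of_ne_two hp2).pow

lemma factor_goddfun_two : ∑' e : ℕ, goddfun (2 ^ e) = 1 := by
  have h : ∀ e : ℕ, goddfun (2 ^ e) = if e = 0 then (1 : ℝ) else 0 := by
    intro e
    rcases e with _ | e
    · simpa using goddfun_one
    · rw [goddfun, if_neg, if_neg (Nat.succ_ne_zero e)]
      rw [Nat.odd_iff]
      simp [Nat.pow_mod]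
  rw [tsum_congr h]
  exact tsum_ite_eq 0 (fun _ => (1 : ℝ))

lemma factor_goddfun_odd {p : ℕ} (hp : p.Prime) (hp2 : p ≠ 2) :
    ∑' e : ℕ, goddfun (p ^ e) = Ffac p := by
  rw [← factor_gfun hp]
  exact tsum_congr fun e => if_pos (odd_pow_of_odd hp hp2 e)

lemma gcd_pow_self_ne_one {P : ℕ} (hP : P.Prime) (e : ℕ) :
    Nat.gcd (P ^ (e + 1)) P ≠ 1 := by
  have : P ∣ Nat.gcd (P ^ (e + 1)) P := Nat.dvd_gcd (dvd_pow_self P (Nat.succ_ne_zero e)) dvd_rfl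
  intro hc
  rw [hc] at this
  exact hP.one_lt.ne' (Nat.eq_one_of_dvd_one this)

lemma coprime_pow_of_ne {p P : ℕ} (hp : p.Prime) (hP : P.Prime) (hne : p ≠ P) (e : ℕ) :
    Nat.gcd (p ^ e) P = 1 :=
  Nat.Coprime.pow_left e ((Nat.coprime_primes hp hP).mpr hne)

lemma factor_f1fun_two (P : ℕ) : ∑' e : ℕ, f1fun P (2 ^ e) = 1 := by
  have h : ∀ e : ℕ, f1fun P (2 ^ e) = if e = 0 then (1 : ℝ) else 0 := by
    intro e
    rcases e with _ | e
    · simpa using f1fun_one P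
    · rw [f1fun, if_neg, if_neg (Nat.succ_ne_zero e)]
      intro hc
      have := hc.1
      rw [Nat.odd_iff] at this
      simp [Nat.pow_mod] at this
  rw [tsum_congr h]
  exact tsum_ite_eq 0 (fun _ => (1 : ℝ))

lemma factor_f1fun_P {P : ℕ} (hP : P.Prime) : ∑' e : ℕ, f1fun P (P ^ e) = 1 := by
  have h : ∀ e : ℕ, f1fun P (P ^ e) = if e = 0 then (1 : ℝ) else 0 := by
    intro e
    rcases e with _ | e
    · simpa using f1fun_one P
    · rw [f1fun, if_neg, if_neg (Nat.succ_ne_zero e)]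
      intro hc
      exact gcd_pow_self_ne_one hP e hc.2
  rw [tsum_congr h]
  exact tsum_ite_eq 0 (fun _ => (1 : ℝ))

lemma factor_f1fun_other {p P : ℕ} (hp : p.Prime) (hP : P.Prime) (hp2 : p ≠ 2)
    (hpP : p ≠ P) : ∑' e : ℕ, f1fun P (p ^ e) = Ffac p := by
  rw [← factor_gfun hp]
  exact tsum_congr fun e =>
    if_pos ⟨odd_pow_of_odd hp hp2 e, coprime_pow_of_ne hp hP hpP e⟩

lemma factor_hPfun_two {P : ℕ} (hP : P.Prime) (hP2 : 2 < P) :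
    ∑' e : ℕ, hPfun P (2 ^ e) = 4 / 3 := by
  have h : ∀ e : ℕ, hPfun P (2 ^ e) = ((4 : ℝ)⁻¹) ^ e := by
    intro e
    rw [hPfun, if_pos (coprime_pow_of_ne Nat.prime_two hP (by omega) e), etaodd_pow_two]
    rw [Nat.cast_pow, Nat.cast_ofNat, ← pow_mul]
    rw [show ((4:ℝ)⁻¹) ^ e = ((2:ℝ) ^ (e * 2))⁻¹ by
      rw [inv_pow, mul_comm e 2, pow_mul]; norm_num]
    rw [one_div]
  rw [tsum_congr h, tsum_geometric_of_lt_one (by norm_num) (by norm_num)]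
  norm_num

lemma factor_hPfun_P {P : ℕ} (hP : P.Prime) : ∑' e : ℕ, hPfun P (P ^ e) = 1 := by
  have h : ∀ e : ℕ, hPfun P (P ^ e) = if e = 0 then (1 : ℝ) else 0 := by
    intro e
    rcases e with _ | e
    · simpa using hPfun_one P
    · rw [hPfun, if_neg (gcd_pow_self_ne_one hP e), if_neg (Nat.succ_ne_zero e)]
  rw [tsum_congr h]
  exact tsum_ite_eq 0 (fun _ => (1 : ℝ))

lemma factor_hPfun_other {p P : ℕ} (hp : p.Prime) (hP : P.Prime) (hp2 : p ≠ 2)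
    (hpP : p ≠ P) : ∑' e : ℕ, hPfun P (p ^ e) = Ffac p := by
  rw [← factor_gfun hp]
  refine tsum_congr fun e => ?_
  rw [hPfun, if_pos (coprime_pow_of_ne hp hP hpP e), gfun]
  congr 1
  rcases e with _ | e
  · simp [etaodd, eta]
  · rw [etaodd_pow_odd hp hp2, eta_pow hp]

/-! ### Euler products -/

lemma summable_gfun : Summable (fun m => ‖gfun m‖) :=
  summable_of_le_inv_sq gfun_nonneg gfun_le

lemma hasProd_gfun :
    HasProd (fun p : Nat.Primes => ∑' e : ℕ, gfun ((p : ℕ) ^ e)) (∑' m, gfun m) :=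
  EulerProduct.eulerProduct_hasProd gfun_one (fun {m n} h => gfun_mul h)
    summable_gfun gfun_zero

lemma hasProd_Ffac : HasProd (fun p : Nat.Primes => Ffac (p : ℕ)) (∑' m, gfun m) := by
  have := hasProd_gfun
  rwa [show (fun p : Nat.Primes => ∑' e : ℕ, gfun ((p : ℕ) ^ e))
      = fun p : Nat.Primes => Ffac (p : ℕ) from funext fun p => factor_gfun p.2] at this

lemma Aconst_eq : Aconst = ∑' m, gfun m := by
  rw [Aconst, ← hasProd_Ffac.tprod_eq]
  rfl

lemma Aconst_nonneg : 0 ≤ Aconst := by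
  rw [Aconst_eq]
  exact tsum_nonneg gfun_nonneg

lemma hasProd_goddfun :
    HasProd (fun p : Nat.Primes => ∑' e : ℕ, goddfun ((p : ℕ) ^ e)) (∑' m, goddfun m) :=
  EulerProduct.eulerProduct_hasProd goddfun_one (fun {m n} h => goddfun_mul h)
    (summable_of_le_inv_sq goddfun_nonneg goddfun_le) goddfun_zero

lemma hasProd_f1fun (P : ℕ) :
    HasProd (fun p : Nat.Primes => ∑' e : ℕ, f1fun P ((p : ℕ) ^ e)) (∑' m, f1fun P m) :=
  EulerProduct.eulerProduct_hasProd (f1fun_one P) (fun {m n} h => f1fun_mul P h)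
    (summable_of_le_inv_sq (f1fun_nonneg P) (f1fun_le P)) (f1fun_zero P)

lemma hasProd_hPfun (P : ℕ) :
    HasProd (fun p : Nat.Primes => ∑' e : ℕ, hPfun P ((p : ℕ) ^ e)) (∑' m, hPfun P m) :=
  EulerProduct.eulerProduct_hasProd (hPfun_one P) (fun {m n} h => hPfun_mul P h)
    (summable_of_le_inv_sq (hPfun_nonneg P) (hPfun_le P)) (hPfun_zero P)

lemma hasProd_rel {f g : Nat.Primes → ℝ} {a b : ℝ} (i : Nat.Primes)
    (hf : HasProd f a) (hg : HasProd g b) (h : ∀ x, x ≠ i → f x = g x) :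
    a * g i = b * f i := by
  have hgu : g = Function.update f i (g i) := by
    funext x
    rcases eq_or_ne x i with rfl | hx
    · simp
    · rw [Function.update_of_ne hx, h x hx]
  rw [hgu] at hg
  exact hf.update' i (g i) hg

/-! ### Identifying the tsums -/

def twoP : Nat.Primes := ⟨2, Nat.prime_two⟩

lemma coe_ne_iff {x y : Nat.Primes} : x ≠ y ↔ (x : ℕ) ≠ (y : ℕ) :=
  not_congr (Subtype.ext_iff)

lemma Sodd_eq : (∑' m, goddfun m) * (11 / 9) = Aconst := by
  have h : ∀ x : Nat.Primes, x ≠ twoP →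
      (fun p : Nat.Primes => Ffac (p : ℕ)) x
        = (fun p : Nat.Primes => ∑' e : ℕ, goddfun ((p : ℕ) ^ e)) x := by
    intro x hx
    exact (factor_goddfun_odd x.2 (coe_ne_iff.mp hx)).symm
  have key := hasProd_rel twoP hasProd_Ffac hasProd_goddfun h
  rw [show ((twoP : ℕ)) = 2 from rfl, factor_goddfun_two, Ffac_two, mul_one] at key
  rw [Aconst_eq]
  exact key.symm

lemma S1_eq {P : ℕ} (hP : P.Prime) (hP2 : 2 < P) :
    (∑' m, f1fun P m) * Ffac P = ∑' m, goddfun m := by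
  set pP : Nat.Primes := ⟨P, hP⟩ with hpP
  have h : ∀ x : Nat.Primes, x ≠ pP →
      (fun p : Nat.Primes => ∑' e : ℕ, goddfun ((p : ℕ) ^ e)) x
        = (fun p : Nat.Primes => ∑' e : ℕ, f1fun P ((p : ℕ) ^ e)) x := by
    intro x hx
    have hxP : (x : ℕ) ≠ P := coe_ne_iff.mp hx
    beta_reduce
    rcases eq_or_ne (x : ℕ) 2 with hx2 | hx2
    · simp only [hx2]
      rw [factor_goddfun_two, factor_f1fun_two]
    · rw [factor_goddfun_odd x.2 hx2, factor_f1fun_other x.2 hP hx2 hxP]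
  have key := hasProd_rel pP hasProd_goddfun (hasProd_f1fun P) h
  rw [show ((pP : ℕ)) = P from rfl, factor_f1fun_P hP, factor_goddfun_odd hP (by omega),
    mul_one] at key
  exact key.symm

lemma Sh_eq {P : ℕ} (hP : P.Prime) (hP2 : 2 < P) :
    ∑' m, hPfun P m = 4 / 3 * ∑' m, f1fun P m := by
  set pP : Nat.Primes := ⟨P, hP⟩ with hpP
  have h : ∀ x : Nat.Primes, x ≠ twoP →
      (fun p : Nat.Primes => ∑' e : ℕ, f1fun P ((p : ℕ) ^ e)) x
        = (fun p : Nat.Primes => ∑' e : ℕ, hPfun P ((p : ℕ) ^ e)) x := by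
    intro x hx
    have hx2 : (x : ℕ) ≠ 2 := coe_ne_iff.mp hx
    beta_reduce
    rcases eq_or_ne (x : ℕ) P with hxP | hxP
    · simp only [hxP]
      rw [factor_f1fun_P hP, factor_hPfun_P hP]
    · rw [factor_f1fun_other x.2 hP hx2 hxP, factor_hPfun_other x.2 hP hx2 hxP]
  have key := hasProd_rel twoP (hasProd_f1fun P) (hasProd_hPfun P) h
  rw [show ((twoP : ℕ)) = 2 from rfl, factor_hPfun_two hP hP2, factor_f1fun_two, mul_one]
    at key
  rw [← key]
  ring

/-! ### Tail bound -/

lemma tail_bound {f : ℕ → ℝ} (h0 : ∀ m, 0 ≤ f m) (h1 : ∀ m, f m ≤ ((m : ℝ) ^ 2)⁻¹)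
    (hz : f 0 = 0) (N : ℕ) :
    |∑ m ∈ Finset.Icc 1 N, f m - ∑' m, f m| ≤ 2 / ((N : ℝ) + 1) := by
  have hsum : Summable f := (summable_of_le_inv_sq h0 h1).of_norm
  have key := Summable.sum_add_tsum_subtype_compl hsum (Finset.Icc 1 N)
  have habs : ∑ m ∈ Finset.Icc 1 N, f m - ∑' m, f m
      = -(∑' x : { x : ℕ // x ∉ Finset.Icc 1 N }, f x) := by linarith
  rw [habs, abs_neg, abs_of_nonneg (tsum_nonneg fun x : { x : ℕ // x ∉ Finset.Icc 1 N } => h0 x)]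
  refine Summable.tsum_le_of_sum_le (hsum.subtype _) fun t => ?_
  rw [← Finset.sum_image (f := f) (g := fun x : { x : ℕ // x ∉ Finset.Icc 1 N } => (x : ℕ))
    (fun x _ y _ h => Subtype.ext h)]
  set u := t.image (fun x : { x : ℕ // x ∉ Finset.Icc 1 N } => (x : ℕ)) with hu
  have hmem : ∀ m ∈ u, m ∉ Finset.Icc 1 N := by
    intro m hm
    rw [hu, Finset.mem_image] at hm
    obtain ⟨x, _, rfl⟩ := hm
    exact x.2
  have hbig : ∀ m ∈ u, f m ≠ 0 → N < m := by
    intro m hm hf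
    by_contra hc
    push_neg at hc
    have h1m : m = 0 := by
      have := hmem m hm
      simp only [Finset.mem_Icc] at this
      omega
    exact hf (h1m ▸ hz)
  rw [← Finset.sum_filter_of_ne hbig]
  calc ∑ m ∈ u.filter (fun m => N < m), f m
      ≤ ∑ m ∈ u.filter (fun m => N < m), ((m : ℝ) ^ 2)⁻¹ :=
        Finset.sum_le_sum fun m _ => h1 m
    _ ≤ ∑ m ∈ Finset.Ioo N (u.sup id + 1), ((m : ℝ) ^ 2)⁻¹ := by
        refine Finset.sum_le_sum_of_subset_of_nonneg ?_ (fun m _ _ => by positivity)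
        intro m hm
        rw [Finset.mem_filter] at hm
        rw [Finset.mem_Ioo]
        exact ⟨hm.2, Nat.lt_succ_of_le (Finset.le_sup (f := id) hm.1)⟩
    _ ≤ 2 / ((N : ℝ) + 1) := sum_Ioo_inv_sq_le N _

/-! ### Bounds on `Ffac` -/

lemma Ffac_one_le {P : ℕ} (hP : 2 < P) : 1 ≤ Ffac P := by
  have h3 : (3 : ℝ) ≤ (P : ℝ) := by exact_mod_cast hP
  have : 0 ≤ (P : ℝ) / (((P : ℝ) + 1) ^ 2 * ((P : ℝ) - 1)) := by
    apply div_nonneg (by positivity)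
    have : (0:ℝ) < ((P : ℝ) + 1) ^ 2 := by positivity
    nlinarith
  rw [Ffac]; linarith

lemma Ffac_le {P : ℕ} (hP : 2 < P) : Ffac P ≤ 1 + 2 / (P : ℝ) ^ 2 := by
  have h3 : (3 : ℝ) ≤ (P : ℝ) := by exact_mod_cast hP
  rw [Ffac, add_le_add_iff_left, div_le_div_iff₀ (by nlinarith) (by positivity)]
  nlinarith

lemma close_to {A F S : ℝ} {d : ℝ} (hA : 0 ≤ A) (hF1 : 1 ≤ F) (hS : S * F = A)
    (hFb : F ≤ 1 + d) : |S - A| ≤ A * d := by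
  have hF0 : (0 : ℝ) < F := by linarith
  have hd : 0 ≤ d := by linarith
  have hS0 : 0 ≤ S := by nlinarith
  have hSA : S ≤ A := by nlinarith
  rw [abs_of_nonpos (by linarith), neg_sub]
  nlinarith

/-! ### Main theorem -/

theorem stmt0 : ∀ ε : ℝ, 0 < ε → ∃ C : ℝ, 0 < C ∧
    ∀ P : ℕ, P.Prime → 2 < P → ∀ K : ℝ, 2 ≤ K →
      |(∑ m ∈ Finset.Icc 1 ⌊K⌋₊,
            if Odd m ∧ Nat.gcd m P = 1 then eta m / (m : ℝ) ^ 2 else 0)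
          - 9 * Aconst / 11| ≤ C * (1 / (P : ℝ) ^ 2 + K ^ (ε - 1)) ∧
      |(∑ m ∈ Finset.Icc 1 ⌊K⌋₊,
            if Nat.gcd m P = 1 then eta (2 * m) / (m : ℝ) ^ 2 else 0)
          - 8 * Aconst / 11| ≤ C * (1 / (P : ℝ) ^ 2 + K ^ (ε - 1)) := by
  intro ε hε
  have hA := Aconst_nonneg
  refine ⟨2 * Aconst + 2, by linarith, ?_⟩
  intro P hP hP2 K hK
  set N := ⌊K⌋₊ with hN
  have hK1 : (1 : ℝ) < K := by linarith
  have hKN : K ≤ (N : ℝ) + 1 := (Nat.lt_floor_add_one K).le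
  have hrpow0 : (0 : ℝ) ≤ K ^ (ε - 1) := Real.rpow_nonneg (by linarith) _
  have htail : 2 / ((N : ℝ) + 1) ≤ 2 * K ^ (ε - 1) := by
    have h2 : 2 / ((N : ℝ) + 1) ≤ 2 / K :=
      div_le_div_of_nonneg_left (by norm_num) (by linarith) hKN
    have h3 : K⁻¹ ≤ K ^ (ε - 1) := by
      rw [← Real.rpow_neg_one]
      exact (Real.rpow_le_rpow_left_iff hK1).mpr (by linarith)
    have : 2 / K = 2 * K⁻¹ := by ring
    linarith
  have hPpos : (0 : ℝ) < (P : ℝ) ^ 2 := by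
    have : (0 : ℝ) < (P : ℝ) := by exact_mod_cast hP.pos
    positivity
  have hinvP : (0 : ℝ) ≤ 1 / (P : ℝ) ^ 2 := by positivity
  have hS1F : (∑' m, f1fun P m) * Ffac P = 9 * Aconst / 11 := by
    rw [S1_eq hP hP2]
    have := Sodd_eq
    linarith
  have hF1 : 1 ≤ Ffac P := Ffac_one_le hP2
  have hFb : Ffac P ≤ 1 + 2 / (P : ℝ) ^ 2 := Ffac_le hP2
  constructor
  · have h1 := tail_bound (f1fun_nonneg P) (f1fun_le P) (f1fun_zero P) N
    have hclose : |(∑' m, f1fun P m) - 9 * Aconst / 11|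
        ≤ (9 * Aconst / 11) * (2 / (P : ℝ) ^ 2) :=
      close_to (by linarith) hF1 hS1F hFb
    have htri := abs_sub_le (∑ m ∈ Finset.Icc 1 N, f1fun P m)
      (∑' m, f1fun P m) (9 * Aconst / 11)
    have hexp : (∑ m ∈ Finset.Icc 1 N,
        if Odd m ∧ Nat.gcd m P = 1 then eta m / (m : ℝ) ^ 2 else 0)
        = ∑ m ∈ Finset.Icc 1 N, f1fun P m := rfl
    rw [hexp]
    have hA2 : (9 * Aconst / 11) * (2 / (P : ℝ) ^ 2) ≤ 2 * Aconst * (1 / (P : ℝ) ^ 2) := by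
      rw [div_mul_div_comm, mul_one_div, div_le_div_iff₀ (by positivity) hPpos]
      nlinarith
    nlinarith [mul_nonneg hA hrpow0]
  · have h1 := tail_bound (hPfun_nonneg P) (hPfun_le P) (hPfun_zero P) N
    have hShF : (∑' m, hPfun P m) * Ffac P = 12 * Aconst / 11 := by
      rw [Sh_eq hP hP2]
      have hF0 : Ffac P ≠ 0 := by linarith
      field_simp
      field_simp at hS1F
      linarith
    have hclose : |(∑' m, hPfun P m) - 12 * Aconst / 11|
        ≤ (12 * Aconst / 11) * (2 / (P : ℝ) ^ 2) :=
      close_to (by linarith) hF1 hShF hFb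
    have hexp : (∑ m ∈ Finset.Icc 1 N,
        if Nat.gcd m P = 1 then eta (2 * m) / (m : ℝ) ^ 2 else 0)
        = 2 / 3 * ∑ m ∈ Finset.Icc 1 N, hPfun P m := by
      rw [Finset.mul_sum]
      refine Finset.sum_congr rfl fun m hm => ?_
      have hm0 : m ≠ 0 := by
        rw [Finset.mem_Icc] at hm
        omega
      rw [hPfun]
      split_ifs with h
      · rw [eta_two_mul hm0, mul_div_assoc]
      · rw [mul_zero]
    rw [hexp]
    have htri := abs_sub_le (∑ m ∈ Finset.Icc 1 N, hPfun P m)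
      (∑' m, hPfun P m) (12 * Aconst / 11)
    have hkey : |2 / 3 * ∑ m ∈ Finset.Icc 1 N, hPfun P m - 8 * Aconst / 11|
        = 2 / 3 * |(∑ m ∈ Finset.Icc 1 N, hPfun P m) - 12 * Aconst / 11| := by
      rw [show 2 / 3 * ∑ m ∈ Finset.Icc 1 N, hPfun P m - 8 * Aconst / 11
          = 2 / 3 * ((∑ m ∈ Finset.Icc 1 N, hPfun P m) - 12 * Aconst / 11) by ring,
        abs_mul, abs_of_nonneg (by norm_num : (0:ℝ) ≤ 2/3)]
    rw [hkey]
    have hA2 : (12 * Aconst / 11) * (2 / (P : ℝ) ^ 2) ≤ 3 * Aconst * (1 / (P : ℝ) ^ 2) := by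
      rw [div_mul_div_comm, mul_one_div, div_le_div_iff₀ (by positivity) hPpos]
      nlinarith
    nlinarith [mul_nonneg hA hrpow0, mul_nonneg hA hinvP]
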